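/- arXiv:2306.07741 — 4 statements merged into one kernel-verified Lean document; each statement's English description precedes it below -/
import Mathlib

section
/- Let S, A be metric spaces with Borel σ-algebras, S×A carrying the metric d_S + d_A, Ω a metric space, γ ∈ [0,1), μ a Borel probability measure on S, and π an L_π-Lipschitz-continuous policy. Fix ω, ω̂ ∈ Ω with transition kernels P_ω, P_ω̂, and let δ_ω, δ_ω̂ be Borel probability measures on S satisfying, for every bounded measurable f : S → ℝ: ∫_S f dδ_ω = (1−γ)∫_S f dμ + γ ∫_S ∫_A ∫_S f(s) dP_ω(ds|s',a) dπ(a|s') dδ_ω(s'), and the analogous equation for (δ_ω̂, P_ω̂). Assume: (i) P_ω is L_P(ω)-Lipschitz-continuous in (s,a), i.e. for every bounded 1-Lipschitz f : S → ℝ, |∫ f dP_ω(·|s,a) − ∫ f dP_ω(·|s̄,ā)| ≤ L_P(ω)·d_{S×A}((s,a),(s̄,ā)); (ii) for every bounded 1-Lipschitz f : S → ℝ and every (s,a), |∫ f dP_ω(·|s,a) − ∫ f dP_ω̂(·|s,a)| ≤ L_{ωP}·d_Ω(ω,ω̂); (iii) γ·L_P(ω)·(1+L_π) < 1; (iv)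 K := sup{ |∫ f dδ_ω − ∫ f dδ_ω̂| : f : S → ℝ bounded and 1-Lipschitz } is finite. Then K ≤ (γ·L_{ωP}/(1 − γ·L_P(ω)·(1+L_π))) · d_Ω(ω,ω̂). -/
open MeasureTheory

/-- A function satisfying a pointwise Lipschitz bound is measurable. -/
lemma measurable_of_lipbound {X : Type*} [MetricSpace X] [MeasurableSpace X] [BorelSpace X]
    {f : X → ℝ} {c : ℝ} (h : ∀ x y, |f x - f y| ≤ c * dist x y) : Measurable f := by
  have hl : LipschitzWith (Real.toNNReal c) f := by
    apply LipschitzWith.of_dist_le_mul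
    intro x y
    rw [Real.dist_eq]
    exact (h x y).trans (mul_le_mul_of_nonneg_right (Real.le_coe_toNNReal c) dist_nonneg)
  exact hl.continuous.measurable

/-- A bounded measurable function is integrable w.r.t. a probability measure. -/
lemma integrable_of_bdd {X : Type*} [MeasurableSpace X] {ν : Measure X}
    [IsProbabilityMeasure ν] {f : X → ℝ} {C : ℝ} (hm : Measurable f)
    (hb : ∀ x, |f x| ≤ C) : Integrable f ν :=
  (integrable_const C).mono' hm.aestronglyMeasurable
    (ae_of_all _ fun x => by simpa [Real.norm_eq_abs] using hb x)

/-- The integral of a bounded measurable function w.r.t. a probability measure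
is bounded by the same constant. -/
lemma abs_integral_le_bdd {X : Type*} [MeasurableSpace X] (ν : Measure X)
    [IsProbabilityMeasure ν] {f : X → ℝ} {C : ℝ} (hm : Measurable f)
    (hb : ∀ x, |f x| ≤ C) : |∫ x, f x ∂ν| ≤ C := by
  calc |∫ x, f x ∂ν| ≤ ∫ x, |f x| ∂ν := by
        simpa [Real.norm_eq_abs] using norm_integral_le_integral_norm f (μ := ν)
    _ ≤ ∫ _x, C ∂ν := integral_mono (integrable_of_bdd hm hb).abs (integrable_const C)
        (fun x => hb x)
    _ = C := by simp

/-- Difference of integrals of two pointwise-close functions. -/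
lemma abs_integral_sub_le_bdd {X : Type*} [MeasurableSpace X] (ν : Measure X)
    [IsProbabilityMeasure ν] {f g : X → ℝ} {B : ℝ} (hf : Integrable f ν)
    (hg : Integrable g ν) (h : ∀ x, |f x - g x| ≤ B) :
    |(∫ x, f x ∂ν) - (∫ x, g x ∂ν)| ≤ B := by
  rw [← integral_sub hf hg]
  calc |∫ x, (f x - g x) ∂ν| ≤ ∫ x, |f x - g x| ∂ν := by
        simpa [Real.norm_eq_abs] using
          norm_integral_le_integral_norm (fun x => f x - g x) (μ := ν)
    _ ≤ ∫ _x, B ∂ν := integral_mono (hf.sub hg).abs (integrable_const B) h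
    _ = B := by simp

/-- Scaling a Kantorovich-type bound from 1-Lipschitz test functions to
`c`-Lipschitz test functions. -/
lemma kant_scale {X : Type*} [MetricSpace X] [MeasurableSpace X]
    (ν₁ ν₂ : Measure X) (M : ℝ) (hM : 0 ≤ M)
    (hbase : ∀ f : X → ℝ, (∃ C, ∀ x, |f x| ≤ C) → (∀ x y, |f x - f y| ≤ dist x y) →
      |(∫ x, f x ∂ν₁) - (∫ x, f x ∂ν₂)| ≤ M)
    {g : X → ℝ} (c : ℝ) (hc : 0 ≤ c)
    (hgb : ∃ C, ∀ x, |g x| ≤ C)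
    (hgl : ∀ x y, |g x - g y| ≤ c * dist x y) :
    |(∫ x, g x ∂ν₁) - (∫ x, g x ∂ν₂)| ≤ c * M := by
  obtain ⟨C, hC⟩ := hgb
  refine le_of_forall_pos_le_add fun ε hε => ?_
  have hM1 : (0:ℝ) < M + 1 := by linarith
  have hεM : 0 < ε / (M + 1) := div_pos hε hM1
  set r : ℝ := c + ε / (M + 1) with hr
  have hrpos : 0 < r := by rw [hr]; linarith
  have hbd : ∀ x, |g x / r| ≤ C / r := by
    intro x
    rw [abs_div, abs_of_pos hrpos]
    gcongr
    exact hC x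
  have hlip1 : ∀ x y, |g x / r - g y / r| ≤ dist x y := by
    intro x y
    rw [div_sub_div_same, abs_div, abs_of_pos hrpos, div_le_iff₀ hrpos]
    calc |g x - g y| ≤ c * dist x y := hgl x y
      _ ≤ dist x y * r := by
          have hd : 0 ≤ dist x y := dist_nonneg
          rw [hr]
          nlinarith
  have key := hbase (fun x => g x / r) ⟨C / r, hbd⟩ hlip1
  simp only [integral_div] at key
  rw [div_sub_div_same, abs_div, abs_of_pos hrpos, div_le_iff₀ hrpos] at key
  have hle : M * r ≤ c * M + ε := by
    have ht : ε / (M + 1) * (M + 1) = ε := div_mul_cancel₀ _ (ne_of_gt hM1)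
    have h2 : M * (ε / (M + 1)) ≤ ε := by nlinarith
    rw [hr]; nlinarith
  calc |(∫ x, g x ∂ν₁) - (∫ x, g x ∂ν₂)| ≤ M * r := key
    _ ≤ c * M + ε := hle

/-- Context-Lipschitz continuity of the γ-discounted state-occupancy measure:
if the Kantorovich distance `K` between the occupancy measures of the two
contexts is finite (formalized: `K` is a least upper bound of the set of
test-function discrepancies), then
`K ≤ (γ L_{ωP}/(1 − γ L_P(ω)(1+L_π))) d_Ω(ω,ω̂)`. -/
theorem stmt_6
    {S A Ω : Type*}
    [MetricSpace S] [MeasurableSpace S] [BorelSpace S]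
    [MetricSpace A] [MeasurableSpace A] [BorelSpace A]
    [MetricSpace Ω]
    (γ : ℝ) (hγ0 : 0 ≤ γ) (hγ1 : γ < 1)
    (ω ω' : Ω)
    -- initial-state distribution
    (μ : Measure S) (hμ : IsProbabilityMeasure μ)
    -- L_π-Lipschitz-continuous policy
    (π : S → Measure A)
    (hπmeas : Measurable π)
    (hπprob : ∀ s, IsProbabilityMeasure (π s))
    (Lπ : ℝ)
    (hπLip : ∀ f : A → ℝ, (∃ C, ∀ x, |f x| ≤ C) →
      (∀ x y, |f x - f y| ≤ dist x y) →
      ∀ s s', |(∫ a, f a ∂(π s)) - (∫ a, f a ∂(π s'))| ≤ Lπ * dist s s')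
    -- transition kernels
    (P P' : S → A → Measure S)
    (hPmeas : Measurable (fun p : S × A => P p.1 p.2))
    (hP'meas : Measurable (fun p : S × A => P' p.1 p.2))
    (hPprob : ∀ s a, IsProbabilityMeasure (P s a))
    (hP'prob : ∀ s a, IsProbabilityMeasure (P' s a))
    -- γ-discounted state-occupancy measures: fixed-point equations
    (δ δ' : Measure S)
    (hδ : IsProbabilityMeasure δ) (hδ' : IsProbabilityMeasure δ')
    (hδfix : ∀ f : S → ℝ, Measurable f → (∃ C, ∀ x, |f x| ≤ C) →
      (∫ s, f s ∂δ) = (1 - γ) * (∫ s, f s ∂μ) +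
        γ * ∫ s', (∫ a, (∫ s, f s ∂(P s' a)) ∂(π s')) ∂δ)
    (hδ'fix : ∀ f : S → ℝ, Measurable f → (∃ C, ∀ x, |f x| ≤ C) →
      (∫ s, f s ∂δ') = (1 - γ) * (∫ s, f s ∂μ) +
        γ * ∫ s', (∫ a, (∫ s, f s ∂(P' s' a)) ∂(π s')) ∂δ')
    (LP LωP : ℝ)
    -- (i) P_ω is L_P(ω)-Lipschitz-continuous in (s,a)
    (hPLip : ∀ f : S → ℝ, (∃ C, ∀ x, |f x| ≤ C) →
      (∀ x y, |f x - f y| ≤ dist x y) →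
      ∀ s a s' a', |(∫ x, f x ∂(P s a)) - (∫ x, f x ∂(P s' a'))| ≤
        LP * (dist s s' + dist a a'))
    -- (ii) kernels are L_{ωP}-close in Kantorovich sense
    (hPclose : ∀ f : S → ℝ, (∃ C, ∀ x, |f x| ≤ C) →
      (∀ x y, |f x - f y| ≤ dist x y) →
      ∀ s a, |(∫ x, f x ∂(P s a)) - (∫ x, f x ∂(P' s a))| ≤ LωP * dist ω ω')
    -- (iii)
    (hcontr : γ * LP * (1 + Lπ) < 1)
    -- (iv) K is the (finite) Kantorovich distance between δ and δ'
    (K : ℝ)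
    (hK : IsLUB {x : ℝ | ∃ f : S → ℝ, (∃ C, ∀ y, |f y| ≤ C) ∧
      (∀ y y', |f y - f y'| ≤ dist y y') ∧
      x = |(∫ s, f s ∂δ) - (∫ s, f s ∂δ')|} K) :
    K ≤ (γ * LωP / (1 - γ * LP * (1 + Lπ))) * dist ω ω' := by
  have hdenom : 0 < 1 - γ * LP * (1 + Lπ) := by linarith
  have hK0 : 0 ≤ K := by
    have h0 : (0:ℝ) ∈ {x : ℝ | ∃ f : S → ℝ, (∃ C, ∀ y, |f y| ≤ C) ∧
        (∀ y y', |f y - f y'| ≤ dist y y') ∧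
        x = |(∫ s, f s ∂δ) - (∫ s, f s ∂δ')|} :=
      ⟨fun _ => 0, ⟨0, by simp⟩, fun _ _ => by simp [dist_nonneg], by simp⟩
    exact hK.1 h0
  -- nonemptiness of S and A
  have hSne : Nonempty S := by
    by_contra h
    rw [not_nonempty_iff] at h
    have h1 : μ Set.univ = 1 := measure_univ
    rw [Set.univ_eq_empty_iff.mpr h, measure_empty] at h1
    exact zero_ne_one h1
  obtain ⟨s₀⟩ := hSne
  have hAne : Nonempty A := by
    by_contra h
    rw [not_nonempty_iff] at h
    have h1 : (π s₀) Set.univ = 1 := measure_univ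
    rw [Set.univ_eq_empty_iff.mpr h, measure_empty] at h1
    exact zero_ne_one h1
  obtain ⟨a₀⟩ := hAne
  have hLωPd : 0 ≤ LωP * dist ω ω' := by
    have := hPclose (fun _ => 0) ⟨0, by simp⟩ (fun _ _ => by simp [dist_nonneg]) s₀ a₀
    simpa using this
  by_cases hS : ∀ s t : S, s = t
  · -- degenerate case: S is a subsingleton, so δ = δ' in Kantorovich sense, K = 0
    have hub : K ≤ 0 := by
      apply hK.2
      rintro x ⟨f, hb, hl, rfl⟩
      have hfc : f = fun _ => f s₀ := funext fun x => by rw [hS x s₀]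
      rw [hfc]
      simp
    have hR : 0 ≤ (γ * LωP / (1 - γ * LP * (1 + Lπ))) * dist ω ω' := by
      rw [div_mul_eq_mul_div]
      apply div_nonneg _ (le_of_lt hdenom)
      nlinarith
    linarith
  · push_neg at hS
    obtain ⟨sa, sb, hsab⟩ := hS
    have hdab : 0 < dist sa sb := dist_pos.mpr hsab
    have hLπ0 : 0 ≤ Lπ := by
      have := hπLip (fun _ => 0) ⟨0, by simp⟩ (fun _ _ => by simp [dist_nonneg]) sa sb
      simp at this
      nlinarith
    have hLP0 : 0 ≤ LP := by
      have := hPLip (fun _ => 0) ⟨0, by simp⟩ (fun _ _ => by simp [dist_nonneg]) sa a₀ sb a₀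
      simp at this
      nlinarith
    -- main estimate: every element of the set is ≤ γ LωP d + γ LP (1+Lπ) K
    have hmain : K ≤ γ * LωP * dist ω ω' + γ * LP * (1 + Lπ) * K := by
      apply hK.2
      rintro x ⟨f, ⟨C, hC⟩, hl, rfl⟩
      have hfmeas : Measurable f := measurable_of_lipbound (c := 1) (by simpa using hl)
      -- the inner test functions
      set h : S → A → ℝ := fun s a => ∫ x, f x ∂(P s a) with hh
      set h' : S → A → ℝ := fun s a => ∫ x, f x ∂(P' s a) with hh'
      set g : S → ℝ := fun s => ∫ a, h s a ∂(π s) with hg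
      set g' : S → ℝ := fun s => ∫ a, h' s a ∂(π s) with hg'
      have hbddf : ∃ C, ∀ x, |f x| ≤ C := ⟨C, hC⟩
      -- bounds on h, h'
      have hhb : ∀ s a, |h s a| ≤ C := fun s a => abs_integral_le_bdd _ hfmeas hC
      have hh'b : ∀ s a, |h' s a| ≤ C := fun s a => abs_integral_le_bdd _ hfmeas hC
      -- h is Lipschitz in a (for fixed s), with constant LP
      have hhlip : ∀ s a a', |h s a - h s a'| ≤ LP * dist a a' := fun s a a' => by
        have := hPLip f hbddf hl s a s a'
        simpa using this
      have hhmeas : ∀ s, Measurable (h s) := fun s =>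
        measurable_of_lipbound (c := LP) (hhlip s)
      -- measurability of h' via kernels
      let κP' : ProbabilityTheory.Kernel (S × A) S :=
        ⟨fun p => P' p.1 p.2, hP'meas⟩
      haveI : ProbabilityTheory.IsMarkovKernel κP' := ⟨fun p => hP'prob p.1 p.2⟩
      let κπ : ProbabilityTheory.Kernel S A := ⟨π, hπmeas⟩
      haveI : ProbabilityTheory.IsMarkovKernel κπ := ⟨hπprob⟩
      have hh'measp : StronglyMeasurable (fun p : S × A => h' p.1 p.2) := by
        have : StronglyMeasurable (fun p : S × A => ∫ x, f x ∂(κP' p)) :=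
          (hfmeas.stronglyMeasurable.comp_measurable measurable_snd
            : StronglyMeasurable fun q : (S × A) × S => f q.2).integral_kernel_prod_right'
        simpa [κP', hh'] using this
      have hg'meas : Measurable g' := by
        have : StronglyMeasurable (fun s => ∫ a, h' s a ∂(κπ s)) :=
          hh'measp.integral_kernel_prod_right'
        simpa [κπ, hg'] using this.measurable
      -- bounds on g, g'
      have hgb : ∀ s, |g s| ≤ C := fun s => abs_integral_le_bdd _ (hhmeas s) (hhb s)
      have hg'b : ∀ s, |g' s| ≤ C := fun s =>
        abs_integral_le_bdd _ (hh'measp.measurable.comp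
          (measurable_prodMk_left)) (hh'b s)
      -- g is Lipschitz with constant LP * (1 + Lπ)
      have hglip : ∀ s t, |g s - g t| ≤ LP * (1 + Lπ) * dist s t := by
        intro s t
        have h1 : |(∫ a, h s a ∂(π s)) - (∫ a, h t a ∂(π s))| ≤ LP * dist s t := by
          apply abs_integral_sub_le_bdd _ (integrable_of_bdd (hhmeas s) (hhb s))
            (integrable_of_bdd (hhmeas t) (hhb t))
          intro a
          have := hPLip f hbddf hl s a t a
          simpa using this
        have h2 : |(∫ a, h t a ∂(π s)) - (∫ a, h t a ∂(π t))| ≤ LP * (Lπ * dist s t) := by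
          apply kant_scale (π s) (π t) (Lπ * dist s t)
            (mul_nonneg hLπ0 dist_nonneg)
            (fun f' hb' hl' => hπLip f' hb' hl' s t) LP hLP0 ⟨C, hhb t⟩ (hhlip t)
        calc |g s - g t| ≤ |(∫ a, h s a ∂(π s)) - (∫ a, h t a ∂(π s))| +
              |(∫ a, h t a ∂(π s)) - (∫ a, h t a ∂(π t))| := by
              rw [hg]; exact abs_sub_le _ _ _
          _ ≤ LP * dist s t + LP * (Lπ * dist s t) := add_le_add h1 h2
          _ = LP * (1 + Lπ) * dist s t := by ring
      have hgmeas : Measurable g := measurable_of_lipbound hglip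
      -- pointwise closeness of g and g'
      have hgg' : ∀ s, |g s - g' s| ≤ LωP * dist ω ω' := by
        intro s
        apply abs_integral_sub_le_bdd _ (integrable_of_bdd (hhmeas s) (hhb s))
          (integrable_of_bdd (hh'measp.measurable.comp measurable_prodMk_left) (hh'b s))
        intro a
        exact hPclose f hbddf hl s a
      -- fixed point equations
      have e1 := hδfix f hfmeas hbddf
      have e2 := hδ'fix f hfmeas hbddf
      have hdiff : (∫ s, f s ∂δ) - (∫ s, f s ∂δ') =
          γ * ((∫ s, g s ∂δ) - (∫ s, g' s ∂δ')) := by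
        rw [e1, e2]; ring
      have hA1 : |(∫ s, g s ∂δ) - (∫ s, g s ∂δ')| ≤ LP * (1 + Lπ) * K := by
        have := kant_scale δ δ' K hK0
          (fun f' hb' hl' => hK.1 ⟨f', hb', hl', rfl⟩)
          (LP * (1 + Lπ)) (by nlinarith) ⟨C, hgb⟩ hglip
        exact this
      have hA2 : |(∫ s, g s ∂δ') - (∫ s, g' s ∂δ')| ≤ LωP * dist ω ω' :=
        abs_integral_sub_le_bdd _ (integrable_of_bdd hgmeas hgb)
          (integrable_of_bdd hg'meas hg'b) hgg'
      calc |(∫ s, f s ∂δ) - (∫ s, f s ∂δ')| =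
            γ * |(∫ s, g s ∂δ) - (∫ s, g' s ∂δ')| := by
            rw [hdiff, abs_mul, abs_of_nonneg hγ0]
        _ ≤ γ * (|(∫ s, g s ∂δ) - (∫ s, g s ∂δ')| +
              |(∫ s, g s ∂δ') - (∫ s, g' s ∂δ')|) := by
            apply mul_le_mul_of_nonneg_left _ hγ0
            exact abs_sub_le _ _ _
        _ ≤ γ * (LP * (1 + Lπ) * K + LωP * dist ω ω') := by
            apply mul_le_mul_of_nonneg_left _ hγ0
            exact add_le_add hA1 hA2
        _ = γ * LωP * dist ω ω' + γ * LP * (1 + Lπ) * K := by ring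
    rw [div_mul_eq_mul_div, le_div_iff₀ hdenom]
    nlinarith [hmain]
end

section
/- Let S, A be metric spaces with Borel σ-algebras, S×A carrying the metric d_S + d_A, and π an L_π-Lipschitz-continuous policy. Let Q : S×A → ℝ be bounded, measurable, and L_Q-Lipschitz on S×A. Then the value function V(s) = ∫_A Q(s,a) dπ(a|s) is Lipschitz on S with constant L_Q·(1 + L_π). -/
open MeasureTheory

/-- Lipschitz continuity of the value function: if `Q` is bounded, measurable
and `L_Q`-Lipschitz on S×A (metric d_S + d_A) and the policy is
`L_π`-Lipschitz-continuous, then `V(s) = ∫_A Q(s,a) dπ(a|s)` is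
`L_Q (1 + L_π)`-Lipschitz on S. -/
theorem stmt_11
    {S A : Type*}
    [MetricSpace S] [MeasurableSpace S] [BorelSpace S]
    [MetricSpace A] [MeasurableSpace A] [BorelSpace A]
    -- L_π-Lipschitz-continuous policy
    (π : S → Measure A)
    (hπmeas : Measurable π)
    (hπprob : ∀ s, IsProbabilityMeasure (π s))
    (Lπ : ℝ)
    (hπLip : ∀ f : A → ℝ, (∃ C, ∀ x, |f x| ≤ C) →
      (∀ x y, |f x - f y| ≤ dist x y) →
      ∀ s s', |(∫ a, f a ∂(π s)) - (∫ a, f a ∂(π s'))| ≤ Lπ * dist s s')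
    -- bounded measurable L_Q-Lipschitz Q-function
    (Q : S → A → ℝ)
    (hQmeas : Measurable (fun p : S × A => Q p.1 p.2))
    (CQ : ℝ) (hQbd : ∀ s a, |Q s a| ≤ CQ)
    (LQ : ℝ)
    (hQLip : ∀ s a s' a', |Q s a - Q s' a'| ≤ LQ * (dist s s' + dist a a')) :
    ∀ s s', |(∫ a, Q s a ∂(π s)) - (∫ a, Q s' a ∂(π s'))| ≤
      LQ * (1 + Lπ) * dist s s' := by
  intro s s'
  haveI := hπprob s
  haveI := hπprob s'
  have hmeasQ : ∀ t : S, Measurable (fun a => Q t a) := by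
    intro t
    have : Measurable (fun a : A => (t, a)) := measurable_const.prodMk measurable_id
    exact hQmeas.comp this
  have hint : ∀ t u : S, Integrable (fun a => Q t a) (π u) := by
    intro t u
    refine (integrable_const CQ).mono' (hmeasQ t).aestronglyMeasurable ?_
    filter_upwards with a
    simpa using hQbd t a
  have hAne : Nonempty A := by
    by_contra h
    haveI : IsEmpty A := not_nonempty_iff.mp h
    have : (π s) Set.univ = 1 := measure_univ
    simp [Set.univ_eq_empty_iff.mpr ‹IsEmpty A›] at this
  obtain ⟨a₀⟩ := hAne
  rcases le_or_gt LQ 0 with hLQ | hLQ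
  · rcases eq_or_lt_of_le hLQ with hLQ0 | hLQneg
    · -- LQ = 0 : Q is globally constant
      have hconst : ∀ t a, Q t a = Q s a₀ := by
        intro t a
        have h := hQLip t a s a₀
        rw [hLQ0, zero_mul] at h
        have := abs_nonneg (Q t a - Q s a₀)
        have : |Q t a - Q s a₀| = 0 := le_antisymm h this
        have := abs_eq_zero.mp this
        linarith
      have hI : ∀ t u : S, (∫ a, Q t a ∂(π u)) = Q s a₀ := by
        intro t u
        haveI := hπprob u
        have : (fun a => Q t a) = fun _ => Q s a₀ := funext fun a => hconst t a
        rw [this, integral_const]; simp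
      rw [hI s s, hI s' s', sub_self, abs_zero, hLQ0]
      simp
    · -- LQ < 0 : forces s = s'
      have hs : s = s' := by
        by_contra hne
        have hd : 0 < dist s s' := dist_pos.mpr hne
        have h := hQLip s a₀ s' a₀
        have : LQ * (dist s s' + dist a₀ a₀) < 0 := by
          simp only [dist_self, add_zero]
          exact mul_neg_of_neg_of_pos hLQneg hd
        linarith [abs_nonneg (Q s a₀ - Q s' a₀)]
      subst hs
      simp
  · -- main case LQ > 0
    have key1 : |(∫ a, Q s a ∂(π s)) - (∫ a, Q s' a ∂(π s))| ≤ LQ * dist s s' := by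
      rw [← integral_sub (hint s s) (hint s' s)]
      calc |∫ a, (Q s a - Q s' a) ∂(π s)|
          ≤ ∫ a, |Q s a - Q s' a| ∂(π s) := by
            simpa [Real.norm_eq_abs] using norm_integral_le_integral_norm (μ := π s) (fun a => Q s a - Q s' a)
        _ ≤ ∫ _, LQ * dist s s' ∂(π s) := by
            refine integral_mono_of_nonneg ?_ (integrable_const _) ?_
            · filter_upwards with a using abs_nonneg _
            · filter_upwards with a
              have := hQLip s a s' a
              simpa using this
        _ = LQ * dist s s' := by simp
    have key2 : |(∫ a, Q s' a ∂(π s)) - (∫ a, Q s' a ∂(π s'))| ≤ LQ * Lπ * dist s s' := by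
      have hf := hπLip (fun a => LQ⁻¹ * Q s' a)
        ⟨LQ⁻¹ * CQ, fun x => by
          rw [abs_mul, abs_of_pos (inv_pos.mpr hLQ)]
          exact mul_le_mul_of_nonneg_left (hQbd s' x) (le_of_lt (inv_pos.mpr hLQ))⟩
        (fun x y => by
          rw [← mul_sub, abs_mul, abs_of_pos (inv_pos.mpr hLQ)]
          have := hQLip s' x s' y
          simp only [dist_self, zero_add] at this
          calc LQ⁻¹ * |Q s' x - Q s' y| ≤ LQ⁻¹ * (LQ * dist x y) :=
                mul_le_mul_of_nonneg_left this (le_of_lt (inv_pos.mpr hLQ))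
            _ = dist x y := by field_simp) s s'
      rw [integral_const_mul, integral_const_mul, ← mul_sub, abs_mul,
        abs_of_pos (inv_pos.mpr hLQ)] at hf
      have := mul_le_mul_of_nonneg_left hf (le_of_lt hLQ)
      calc |(∫ a, Q s' a ∂(π s)) - (∫ a, Q s' a ∂(π s'))|
          = LQ * (LQ⁻¹ * |(∫ a, Q s' a ∂(π s)) - (∫ a, Q s' a ∂(π s'))|) := by
            field_simp
        _ ≤ LQ * (Lπ * dist s s') := this
        _ = LQ * Lπ * dist s s' := by ring
    calc |(∫ a, Q s a ∂(π s)) - (∫ a, Q s' a ∂(π s'))|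
        ≤ |(∫ a, Q s a ∂(π s)) - (∫ a, Q s' a ∂(π s))| +
          |(∫ a, Q s' a ∂(π s)) - (∫ a, Q s' a ∂(π s'))| := abs_sub_le _ _ _
      _ ≤ LQ * dist s s' + LQ * Lπ * dist s s' := add_le_add key1 key2
      _ = LQ * (1 + Lπ) * dist s s' := by ring
end

section
/- Let S, A be metric spaces with Borel σ-algebras, S×A carrying the metric d_S + d_A, and π an L_π-Lipschitz-continuous policy. Let f : S×A → ℝ be bounded, measurable, and 1-Lipschitz with respect to d_{S×A}. Then the function g : S → ℝ defined by g(s) = ∫_A f(s,a) dπ(a|s) is (1 + L_π)-Lipschitz on S. -/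
open MeasureTheory

/-- Integrating a bounded measurable 1-Lipschitz function on S×A (metric
d_S + d_A) against an `L_π`-Lipschitz-continuous policy yields a
`(1 + L_π)`-Lipschitz function on S. -/
theorem stmt_12
    {S A : Type*}
    [MetricSpace S] [MeasurableSpace S] [BorelSpace S]
    [MetricSpace A] [MeasurableSpace A] [BorelSpace A]
    -- L_π-Lipschitz-continuous policy
    (π : S → Measure A)
    (hπmeas : Measurable π)
    (hπprob : ∀ s, IsProbabilityMeasure (π s))
    (Lπ : ℝ)
    (hπLip : ∀ g : A → ℝ, (∃ C, ∀ x, |g x| ≤ C) →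
      (∀ x y, |g x - g y| ≤ dist x y) →
      ∀ s s', |(∫ a, g a ∂(π s)) - (∫ a, g a ∂(π s'))| ≤ Lπ * dist s s')
    -- bounded measurable 1-Lipschitz f on S×A
    (f : S × A → ℝ)
    (hfmeas : Measurable f)
    (Cf : ℝ) (hfbd : ∀ p, |f p| ≤ Cf)
    (hfLip : ∀ p q : S × A, |f p - f q| ≤ dist p.1 q.1 + dist p.2 q.2) :
    ∀ s s', |(∫ a, f (s, a) ∂(π s)) - (∫ a, f (s', a) ∂(π s'))| ≤
      (1 + Lπ) * dist s s' := by
  intro s s'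
  haveI := hπprob s
  haveI := hπprob s'
  have hint : ∀ (t : S) (μ : Measure A) [IsProbabilityMeasure μ],
      Integrable (fun a => f (t, a)) μ := by
    intro t μ _
    refine (integrable_const Cf).mono' ?_ ?_
    · exact (hfmeas.comp (measurable_const.prodMk measurable_id)).aestronglyMeasurable
    · exact Filter.Eventually.of_forall fun a => by
        simpa [Real.norm_eq_abs] using hfbd (t, a)
  have h1 : |(∫ a, f (s, a) ∂(π s)) - (∫ a, f (s', a) ∂(π s))| ≤ dist s s' := by
    rw [← integral_sub (hint s (π s)) (hint s' (π s))]
    calc |∫ a, (f (s, a) - f (s', a)) ∂(π s)|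
        ≤ ∫ a, |f (s, a) - f (s', a)| ∂(π s) := by
          simpa [Real.norm_eq_abs] using
            norm_integral_le_integral_norm (μ := π s) (fun a => f (s, a) - f (s', a))
      _ ≤ ∫ _a, dist s s' ∂(π s) := by
          refine integral_mono_of_nonneg (Filter.Eventually.of_forall fun a => abs_nonneg _)
            (integrable_const _) (Filter.Eventually.of_forall fun a => ?_)
          simpa using hfLip (s, a) (s', a)
      _ = dist s s' := by simp
  have h2 : |(∫ a, f (s', a) ∂(π s)) - (∫ a, f (s', a) ∂(π s'))| ≤ Lπ * dist s s' := by
    refine hπLip (fun a => f (s', a)) ⟨Cf, fun a => hfbd _⟩ (fun x y => ?_) s s'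
    simpa using hfLip (s', x) (s', y)
  calc |(∫ a, f (s, a) ∂(π s)) - (∫ a, f (s', a) ∂(π s'))|
      ≤ |(∫ a, f (s, a) ∂(π s)) - (∫ a, f (s', a) ∂(π s))| +
        |(∫ a, f (s', a) ∂(π s)) - (∫ a, f (s', a) ∂(π s'))| := abs_sub_le _ _ _
    _ ≤ dist s s' + Lπ * dist s s' := add_le_add h1 h2
    _ = (1 + Lπ) * dist s s' := by ring
end

section
/- Let S, A be metric spaces with Borel σ-algebras, S×A carrying the metric d_S + d_A, π an L_π-Lipschitz-continuous policy, and P a transition kernel such that for every bounded 1-Lipschitz f : S → ℝ, |∫ f dP(·|s,a) − ∫ f dP(·|s̄,ā)| ≤ L_P·d_{S×A}((s,a),(s̄,ā)) for all (s,a),(s̄,ā) ∈ S×A. Then for every bounded measurable 1-Lipschitz f : S → ℝ, the function h_f : S → ℝ defined by h_f(s') = ∫_A (∫_S f(s) dP(ds|s',a)) dπ(a|s') is Lipschitz on S with constant L_P·(1 + L_π). -/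
open MeasureTheory

/-- For an `L_P`-Lipschitz transition kernel and an `L_π`-Lipschitz-continuous
policy, the function `h_f(s') = ∫_A ∫_S f(s) dP(ds|s',a) dπ(a|s')` is
`L_P (1 + L_π)`-Lipschitz on S, for every bounded measurable 1-Lipschitz
`f : S → ℝ`. -/
theorem stmt_13
    {S A : Type*}
    [MetricSpace S] [MeasurableSpace S] [BorelSpace S]
    [MetricSpace A] [MeasurableSpace A] [BorelSpace A]
    -- L_π-Lipschitz-continuous policy
    (π : S → Measure A)
    (hπmeas : Measurable π)
    (hπprob : ∀ s, IsProbabilityMeasure (π s))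
    (Lπ : ℝ)
    (hπLip : ∀ g : A → ℝ, (∃ C, ∀ x, |g x| ≤ C) →
      (∀ x y, |g x - g y| ≤ dist x y) →
      ∀ s s', |(∫ a, g a ∂(π s)) - (∫ a, g a ∂(π s'))| ≤ Lπ * dist s s')
    -- L_P-Lipschitz transition kernel
    (P : S → A → Measure S)
    (hPmeas : Measurable (fun p : S × A => P p.1 p.2))
    (hPprob : ∀ s a, IsProbabilityMeasure (P s a))
    (LP : ℝ)
    (hPLip : ∀ g : S → ℝ, (∃ C, ∀ x, |g x| ≤ C) →
      (∀ x y, |g x - g y| ≤ dist x y) →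
      ∀ s a s' a', |(∫ x, g x ∂(P s a)) - (∫ x, g x ∂(P s' a'))| ≤
        LP * (dist s s' + dist a a')) :
    ∀ f : S → ℝ, Measurable f → (∃ C, ∀ x, |f x| ≤ C) →
      (∀ x y, |f x - f y| ≤ dist x y) →
      ∀ s' s'', |(∫ a, (∫ s, f s ∂(P s' a)) ∂(π s')) -
          (∫ a, (∫ s, f s ∂(P s'' a)) ∂(π s''))| ≤
        LP * (1 + Lπ) * dist s' s'' := by
  intro f hfmeas hfbd hfLip s' s''
  obtain ⟨C, hC⟩ := hfbd
  by_cases hss : s' = s''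
  · subst hss; simp
  have hd : 0 < dist s' s'' := dist_pos.mpr hss
  -- A is nonempty
  haveI := hπprob s'
  have hA : Nonempty A := by
    by_contra h
    have h1 : (π s') Set.univ = 1 := measure_univ
    rw [Set.univ_eq_empty_iff.mpr (not_nonempty_iff.mp h)] at h1
    simp at h1
  obtain ⟨a0⟩ := hA
  -- LP ≥ 0
  have hLP : 0 ≤ LP := by
    have := hPLip f ⟨C, hC⟩ hfLip s' a0 s'' a0
    have h0 : (0:ℝ) ≤ LP * (dist s' s'' + dist a0 a0) := le_trans (abs_nonneg _) this
    simp at h0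
    nlinarith
  -- Lπ ≥ 0
  have hLπ : 0 ≤ Lπ := by
    have := hπLip (fun _ => 0) ⟨0, by simp⟩ (by intro x y; simp [dist_nonneg]) s' s''
    simp at this
    nlinarith
  set g1 : A → ℝ := fun a => ∫ x, f x ∂(P s' a) with hg1
  set g2 : A → ℝ := fun a => ∫ x, f x ∂(P s'' a) with hg2
  have hCnn : 0 ≤ C := le_trans (abs_nonneg _) (hC s')
  -- bounds on g1 g2
  have hbd : ∀ (t : S) (a : A), |∫ x, f x ∂(P t a)| ≤ C := by
    intro t a
    haveI := hPprob t a
    calc |∫ x, f x ∂(P t a)| ≤ C * ((P t a) Set.univ).toReal := by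
          rw [← Real.norm_eq_abs]
          exact norm_integral_le_of_norm_le_const (Filter.Eventually.of_forall fun x => by
            rw [Real.norm_eq_abs]; exact hC x)
      _ = C := by simp
  -- Lipschitz bounds
  have hg1Lip : ∀ a a', |g1 a - g1 a'| ≤ LP * dist a a' := by
    intro a a'
    have := hPLip f ⟨C, hC⟩ hfLip s' a s' a'
    simpa using this
  have hg2Lip : ∀ a a', |g2 a - g2 a'| ≤ LP * dist a a' := by
    intro a a'
    have := hPLip f ⟨C, hC⟩ hfLip s'' a s'' a'
    simpa using this
  -- continuity → measurability
  have hcont : ∀ (g : A → ℝ), (∀ a a', |g a - g a'| ≤ LP * dist a a') → Continuous g := by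
    intro g hg
    refine (LipschitzWith.of_dist_le_mul (K := Real.toNNReal LP) ?_).continuous
    intro x y
    rw [Real.dist_eq, Real.coe_toNNReal _ hLP]
    exact hg x y
  have hg1c := hcont g1 hg1Lip
  have hg2c := hcont g2 hg2Lip
  -- integrability
  have hint : ∀ (g : A → ℝ) (t : S), Continuous g → (∀ a, |g a| ≤ C) → Integrable g (π t) := by
    intro g t hgc hgb
    haveI := hπprob t
    exact ⟨hgc.aestronglyMeasurable, HasFiniteIntegral.of_bounded
      (C := C) (Filter.Eventually.of_forall fun a => by rw [Real.norm_eq_abs]; exact hgb a)⟩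
  have hint1 : Integrable g1 (π s') := hint g1 s' hg1c (fun a => hbd s' a)
  have hint2 : Integrable g2 (π s') := hint g2 s' hg2c (fun a => hbd s'' a)
  -- term 1
  have hT1 : |(∫ a, g1 a ∂(π s')) - (∫ a, g2 a ∂(π s'))| ≤ LP * dist s' s'' := by
    rw [← integral_sub hint1 hint2]
    calc |∫ a, (g1 a - g2 a) ∂(π s')| ≤ (LP * dist s' s'') * ((π s') Set.univ).toReal := by
          rw [← Real.norm_eq_abs]
          refine norm_integral_le_of_norm_le_const (Filter.Eventually.of_forall fun a => ?_)
          rw [Real.norm_eq_abs]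
          have := hPLip f ⟨C, hC⟩ hfLip s' a s'' a
          simpa using this
      _ = LP * dist s' s'' := by haveI := hπprob s'; simp
  -- term 2
  have hT2 : |(∫ a, g2 a ∂(π s')) - (∫ a, g2 a ∂(π s''))| ≤ LP * Lπ * dist s' s'' := by
    rcases eq_or_lt_of_le hLP with hLP0 | hLP0
    · -- LP = 0 : g2 constant
      have hgconst : ∀ a, g2 a = g2 a0 := by
        intro a
        have h := hg2Lip a a0
        rw [← hLP0] at h; simp at h
        linarith
      have : (fun a => g2 a) = fun _ => g2 a0 := funext hgconst
      rw [show g2 = fun _ => g2 a0 from funext hgconst]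
      haveI := hπprob s'; haveI := hπprob s''
      simp
      positivity
    · -- LP > 0
      have hscaled := hπLip (fun a => g2 a / LP) ⟨C / LP, fun a => by
          rw [abs_div, abs_of_pos hLP0]
          exact div_le_div_of_nonneg_right (hbd s'' a) hLP0.le |>.trans_eq rfl⟩
        (fun a a' => by
          rw [div_sub_div_same, abs_div, abs_of_pos hLP0, div_le_iff₀ hLP0]
          calc |g2 a - g2 a'| ≤ LP * dist a a' := hg2Lip a a'
            _ = dist a a' * LP := mul_comm _ _) s' s''
      rw [integral_div, integral_div, div_sub_div_same, abs_div, abs_of_pos hLP0,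
        div_le_iff₀ hLP0] at hscaled
      calc |(∫ a, g2 a ∂(π s')) - (∫ a, g2 a ∂(π s''))| ≤ Lπ * dist s' s'' * LP := hscaled
        _ = LP * Lπ * dist s' s'' := by ring
  calc |(∫ a, g1 a ∂(π s')) - (∫ a, g2 a ∂(π s''))|
      ≤ |(∫ a, g1 a ∂(π s')) - (∫ a, g2 a ∂(π s'))| +
        |(∫ a, g2 a ∂(π s')) - (∫ a, g2 a ∂(π s''))| := abs_sub_le _ _ _
    _ ≤ LP * dist s' s'' + LP * Lπ * dist s' s'' := add_le_add hT1 hT2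
    _ = LP * (1 + Lπ) * dist s' s'' := by ring
end
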